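/- Let d₁, d₂, p₁, p₂ be real numbers with d₁ > 0, d₂ > 0, p₂ > 0, p₁ > 0 and p₁ + p₂ ≤ d₁, and let t₁ > 0, t₂ < 0 be real numbers. Then the discriminant (d₂²/(d₁p₂)·t₂ − t₁)² − 4·(d₂²/(d₁p₂)·t₂²)·(d₂²/(4p₂d₁) + (2d₁ − p₁ − 2p₂)/(4d₁)) is nonnegative if and only if t₁/t₂ ≤ d₂²/(d₁p₂) − (d₂/d₁)·√(d₂²/p₂² + (2d₁ − p₁ − 2p₂)/p₂); moreover this quantity d₂²/(d₁p₂) − (d₂/d₁)·√(d₂²/p₂² + (2d₁ − p₁ − 2p₂)/p₂) is negative. -/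

import Mathlib

theorem stmt_5 (d₁ d₂ p₁ p₂ : ℝ) (hd₁ : 0 < d₁) (hd₂ : 0 < d₂) (hp₂ : 0 < p₂)
    (hp₁ : 0 < p₁) (hsum : p₁ + p₂ ≤ d₁)
    (t₁ t₂ : ℝ) (ht₁ : 0 < t₁) (ht₂ : t₂ < 0) :
    (0 ≤ (d₂^2/(d₁*p₂) * t₂ - t₁)^2 -
        4 * (d₂^2/(d₁*p₂) * t₂^2) *
          (d₂^2/(4*p₂*d₁) + (2*d₁ - p₁ - 2*p₂)/(4*d₁)) ↔
      t₁/t₂ ≤ d₂^2/(d₁*p₂) -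
        (d₂/d₁) * Real.sqrt (d₂^2/p₂^2 + (2*d₁ - p₁ - 2*p₂)/p₂)) ∧
    d₂^2/(d₁*p₂) -
        (d₂/d₁) * Real.sqrt (d₂^2/p₂^2 + (2*d₁ - p₁ - 2*p₂)/p₂) < 0 := by
  have hE : (0:ℝ) < 2*d₁ - p₁ - 2*p₂ := by nlinarith
  set S := Real.sqrt (d₂^2/p₂^2 + (2*d₁ - p₁ - 2*p₂)/p₂) with hSdef
  have hIn : (0:ℝ) ≤ d₂^2/p₂^2 + (2*d₁ - p₁ - 2*p₂)/p₂ := by positivity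
  have hS0 : 0 ≤ S := Real.sqrt_nonneg _
  have hSsq : S^2 = d₂^2/p₂^2 + (2*d₁ - p₁ - 2*p₂)/p₂ := Real.sq_sqrt hIn
  set a := d₂^2/(d₁*p₂) with hadef
  set B := (d₂/d₁) * S with hBdef
  have ha0 : 0 < a := by positivity
  have hB0 : 0 ≤ B := by positivity
  -- key: B² = 4aK
  have hB2 : B^2 = 4 * a * (d₂^2/(4*p₂*d₁) + (2*d₁ - p₁ - 2*p₂)/(4*d₁)) := by
    rw [hBdef, hadef, mul_pow, hSsq]
    field_simp
  -- B² - a² > 0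
  have hdiff : B^2 - a^2 = d₂^2*(2*d₁-p₁-2*p₂)/(d₁^2*p₂) := by
    rw [hB2, hadef]; field_simp; ring
  have haB : a < B := by
    have hpos : 0 < d₂^2*(2*d₁-p₁-2*p₂)/(d₁^2*p₂) := by positivity
    nlinarith
  clear_value S a B
  refine ⟨?_, by linarith⟩
  have hKeq : 4 * (a * t₂^2) * (d₂^2/(4*p₂*d₁) + (2*d₁ - p₁ - 2*p₂)/(4*d₁))
      = (B*t₂)^2 := by rw [mul_pow, hB2]; ring
  rw [hKeq, div_le_iff_of_neg ht₂]
  have hneg : a*t₂ - t₁ < 0 := by nlinarith [mul_neg_of_pos_of_neg ha0 ht₂]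
  have hBt : B*t₂ ≤ 0 := mul_nonpos_of_nonneg_of_nonpos hB0 ht₂.le
  have key : (a*t₂-t₁)^2 - (B*t₂)^2 = ((a*t₂-t₁) - B*t₂)*((a*t₂-t₁) + B*t₂) := by
    ring
  constructor
  · intro h
    by_contra hc
    push_neg at hc
    have hc' : B*t₂ < a*t₂ - t₁ := by linarith [sub_mul a B t₂]
    have h1 : ((a*t₂-t₁) - B*t₂)*((a*t₂-t₁) + B*t₂) < 0 :=
      mul_neg_of_pos_of_neg (by linarith) (by linarith)
    linarith
  · intro h
    have h2 : a*t₂ - t₁ ≤ B*t₂ := by linarith [sub_mul a B t₂]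
    have h1 : 0 ≤ ((a*t₂-t₁) - B*t₂)*((a*t₂-t₁) + B*t₂) := by
      have h0 : ((a*t₂-t₁) - B*t₂)*((a*t₂-t₁) + B*t₂)
          = (-((a*t₂-t₁) - B*t₂))*(-((a*t₂-t₁) + B*t₂)) := by ring
      rw [h0]
      exact mul_nonneg (by linarith) (by linarith)
    linarith
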